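/- Let θ = (θ₁,θ₂,θ₃,θ₄) ∈ ℂ⁴ and suppose O ⊆ S(θ) is a finite G(2)-orbit with at least 7 elements. Then all four parameters θ₁, θ₂, θ₃, θ₄ are real, and the orbit O lies in the real part of the surface: O ⊆ S(θ) ∩ ℝ³, i.e. every coordinate of every point of O is a real number. -/

import Mathlib

noncomputable section

/-- The defining cubic polynomial `f(x,θ)` of the character variety. -/
def pvF (θ : ℂ × ℂ × ℂ × ℂ) (x : ℂ × ℂ × ℂ) : ℂ :=
  x.1 * x.2.1 * x.2.2 + x.1 ^ 2 + x.2.1 ^ 2 + x.2.2 ^ 2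
    - θ.1 * x.1 - θ.2.1 * x.2.1 - θ.2.2.1 * x.2.2 + θ.2.2.2

/-- The affine cubic surface `S(θ)`. -/
def pvS (θ : ℂ × ℂ × ℂ × ℂ) : Set (ℂ × ℂ × ℂ) := {x | pvF θ x = 0}

/-- The three involutions `σ₁, σ₂, σ₃` (indexed by `Fin 3`). -/
def sig (θ : ℂ × ℂ × ℂ × ℂ) : Fin 3 → (ℂ × ℂ × ℂ) → (ℂ × ℂ × ℂ) :=
  ![fun x => (θ.1 - x.2.1 * x.2.2 - x.1, x.2.1, x.2.2),
    fun x => (x.1, θ.2.1 - x.1 * x.2.2 - x.2.1, x.2.2),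
    fun x => (x.1, x.2.1, θ.2.2.1 - x.1 * x.2.1 - x.2.2)]

lemma sig_involutive (θ : ℂ × ℂ × ℂ × ℂ) (i : Fin 3) : Function.Involutive (sig θ i) := by
  intro x
  obtain ⟨a, b, c⟩ := x
  fin_cases i <;> simp [sig]

/-- `σᵢ` as a bijection (permutation) of `ℂ³`. -/
def sigPerm (θ : ℂ × ℂ × ℂ × ℂ) (i : Fin 3) : Equiv.Perm (ℂ × ℂ × ℂ) :=
  (sig_involutive θ i).toPerm

/-- The subgroup `G(2)` of even words: the subgroup of bijections of `ℂ³`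
generated by the products `σᵢ σⱼ`. -/
def G2 (θ : ℂ × ℂ × ℂ × ℂ) : Subgroup (Equiv.Perm (ℂ × ℂ × ℂ)) :=
  Subgroup.closure {g | ∃ i j : Fin 3, g = sigPerm θ i * sigPerm θ j}

-- ### plumbing
lemma sig0_apply (θ : ℂ × ℂ × ℂ × ℂ) (x : ℂ × ℂ × ℂ) :
    sig θ 0 x = (θ.1 - x.2.1 * x.2.2 - x.1, x.2.1, x.2.2) := rfl

lemma sig1_apply (θ : ℂ × ℂ × ℂ × ℂ) (x : ℂ × ℂ × ℂ) :
    sig θ 1 x = (x.1, θ.2.1 - x.1 * x.2.2 - x.2.1, x.2.2) := rfl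

lemma sig2_apply (θ : ℂ × ℂ × ℂ × ℂ) (x : ℂ × ℂ × ℂ) :
    sig θ 2 x = (x.1, x.2.1, θ.2.2.1 - x.1 * x.2.1 - x.2.2) := rfl

lemma sigPerm_apply (θ : ℂ × ℂ × ℂ × ℂ) (i : Fin 3) (x : ℂ × ℂ × ℂ) :
    sigPerm θ i x = sig θ i x := rfl

lemma sigPerm_inv (θ : ℂ × ℂ × ℂ × ℂ) (i : Fin 3) : (sigPerm θ i)⁻¹ = sigPerm θ i := rfl

lemma pair_mem_G2 (θ : ℂ × ℂ × ℂ × ℂ) (i j : Fin 3) :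
    sigPerm θ i * sigPerm θ j ∈ G2 θ := Subgroup.subset_closure ⟨i, j, rfl⟩

section Orbit

variable (θ : ℂ × ℂ × ℂ × ℂ) (x₀ : ℂ × ℂ × ℂ) (O : Set (ℂ × ℂ × ℂ))

lemma O_mem_iff (hO : O = {y | ∃ g ∈ G2 θ, g x₀ = y}) (y : ℂ × ℂ × ℂ) : y ∈ O ↔ ∃ g ∈ G2 θ, g x₀ = y := by rw [hO]; rfl

lemma O_step (hO : O = {y | ∃ g ∈ G2 θ, g x₀ = y}) (i j : Fin 3) (p : ℂ × ℂ × ℂ) (hp : p ∈ O) : sig θ i (sig θ j p) ∈ O := by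
  obtain ⟨g, hg, rfl⟩ := (O_mem_iff θ x₀ O hO p).1 hp
  exact (O_mem_iff θ x₀ O hO _).2 ⟨(sigPerm θ i * sigPerm θ j) * g,
    mul_mem (pair_mem_G2 θ i j) hg, rfl⟩

lemma O_iter (hO : O = {y | ∃ g ∈ G2 θ, g x₀ = y}) (g : Equiv.Perm (ℂ × ℂ × ℂ)) (hg : g ∈ G2 θ) (p : ℂ × ℂ × ℂ) (hp : p ∈ O)
    (k : ℕ) : (g ^ k) p ∈ O := by
  obtain ⟨g₀, hg₀, rfl⟩ := (O_mem_iff θ x₀ O hO p).1 hp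
  exact (O_mem_iff θ x₀ O hO _).2 ⟨g ^ k * g₀, mul_mem (pow_mem hg k) hg₀, rfl⟩

lemma O_period (hO : O = {y | ∃ g ∈ G2 θ, g x₀ = y}) (hfin : O.Finite) (g : Equiv.Perm (ℂ × ℂ × ℂ)) (hg : g ∈ G2 θ)
    (p : ℂ × ℂ × ℂ) (hp : p ∈ O) :
    ∃ m, 1 ≤ m ∧ ∀ k, (g ^ (k + m)) p = (g ^ k) p := by
  obtain ⟨i, -, j, -, hij, he⟩ := Set.infinite_univ.exists_ne_map_eq_of_mapsTo
    (f := fun k : ℕ => (g ^ k) p) (fun k _ => O_iter θ x₀ O hO g hg p hp k) hfin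
  wlog hlt : i < j generalizing i j
  · exact this j i hij.symm he.symm (by omega)
  have hmp : (g ^ (j - i)) p = p := by
    have h1 : (g ^ i) ((g ^ (j - i)) p) = (g ^ i) p := by
      rw [← Equiv.Perm.mul_apply, ← pow_add]
      rw [show i + (j - i) = j from by omega]
      exact he.symm
    exact (g ^ i).injective h1
  refine ⟨j - i, by omega, fun k => ?_⟩
  rw [pow_add, Equiv.Perm.mul_apply, hmp]

lemma orbit_subset (hO : O = {y | ∃ g ∈ G2 θ, g x₀ = y}) (C : Set (ℂ × ℂ × ℂ)) (hCcl : ∀ i : Fin 3, ∀ p ∈ C, sig θ i p ∈ C)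
    (x : ℂ × ℂ × ℂ) (hx : x ∈ O) (hxC : x ∈ C) : O ⊆ C := by
  set H : Subgroup (Equiv.Perm (ℂ × ℂ × ℂ)) :=
    { carrier := {g | (∀ p ∈ C, g p ∈ C) ∧ (∀ p ∈ C, g⁻¹ p ∈ C)},
      one_mem' := ⟨fun p hp => hp, fun p hp => hp⟩,
      mul_mem' := by
        rintro g h ⟨hg1, hg2⟩ ⟨hh1, hh2⟩
        refine ⟨fun p hp => ?_, fun p hp => ?_⟩
        · rw [Equiv.Perm.mul_apply]; exact hg1 _ (hh1 _ hp)
        · rw [mul_inv_rev, Equiv.Perm.mul_apply]; exact hh2 _ (hg2 _ hp)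
      inv_mem' := by
        rintro g ⟨hg1, hg2⟩
        exact ⟨fun p hp => hg2 p hp, fun p hp => by rw [inv_inv]; exact hg1 p hp⟩ } with hH
  have hle : G2 θ ≤ H := by
    rw [G2]
    refine (Subgroup.closure_le H).2 ?_
    rintro g ⟨i, j, rfl⟩
    constructor
    · intro p hp
      rw [Equiv.Perm.mul_apply, sigPerm_apply, sigPerm_apply]
      exact hCcl i _ (hCcl j p hp)
    · intro p hp
      rw [mul_inv_rev, sigPerm_inv, sigPerm_inv, Equiv.Perm.mul_apply,
        sigPerm_apply, sigPerm_apply]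
      exact hCcl j _ (hCcl i p hp)
  intro q hq
  obtain ⟨g, hg, rfl⟩ := (O_mem_iff θ x₀ O hO q).1 hq
  obtain ⟨g₀, hg₀, hgx⟩ := (O_mem_iff θ x₀ O hO x).1 hx
  have h1 : (g * g₀⁻¹) x ∈ C := (hle (mul_mem hg (inv_mem hg₀))).1 x hxC
  rw [Equiv.Perm.mul_apply, ← hgx, Equiv.Perm.inv_eq_iff_eq.mpr rfl] at h1
  exact h1

end Orbit

lemma abs_one_of_pow {l : ℂ} {m : ℕ} (hm : 1 ≤ m) (h : l ^ m = 1) : ‖l‖ = 1 := by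
  have h1 : ‖l‖ ^ m = 1 := by rw [← norm_pow, h, norm_one]
  rcases pow_eq_one_iff_cases.1 h1 with h2 | h2 | h2
  · omega
  · exact h2
  · have := norm_nonneg l; linarith [h2.1]

lemma keyLemma (a tU tV : ℂ) (U V : ℕ → ℂ) (m : ℕ) (hm : 1 ≤ m)
    (hU : ∀ k, U (k+1) = tU - a * V k - U k)
    (hV : ∀ k, V (k+1) = tV - a * U (k+1) - V k)
    (hUm : ∀ k, U (k+m) = U k) (hVm : ∀ k, V (k+m) = V k)
    (hne : U 1 ≠ U 0 ∨ V 1 ≠ V 0) : a.im = 0 := by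
  by_contra him
  have ha0 : a ≠ 0 := fun h => him (by simp [h])
  have ha2 : a ^ 2 ≠ 0 := pow_ne_zero _ ha0
  have ha4 : a ^ 2 ≠ 4 := by
    intro h
    have h' : (a - 2) * (a + 2) = 0 := by linear_combination h
    rcases mul_eq_zero.1 h' with h'' | h''
    · refine him ?_
      have ha : a = (2:ℂ) := by linear_combination h''
      simp [ha]
    · refine him ?_
      have ha : a = (-2:ℂ) := by linear_combination h''
      simp [ha]
  obtain ⟨s, hs⟩ : ∃ s : ℂ, s ^ 2 = (a^2-2)^2 - 4 :=
    ⟨((a^2-2)^2 - 4).cpow 2⁻¹, by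
      have := Complex.cpow_nat_inv_pow ((a^2-2)^2 - 4) (by norm_num : (2:ℕ) ≠ 0)
      simpa using this⟩
  have hsne : s ≠ 0 := by
    intro h
    rw [h] at hs
    have h' : a^2 * (a^2 - 4) = 0 := by linear_combination -hs
    rcases mul_eq_zero.1 h' with h''|h''
    · exact ha2 h''
    · exact ha4 (by linear_combination h'')
  obtain ⟨lam, mu, hsum, hprod, hdiff⟩ :
      ∃ lam mu : ℂ, lam + mu = a^2 - 2 ∧ lam * mu = 1 ∧ lam - mu = s :=
    ⟨((a^2-2) + s)/2, ((a^2-2) - s)/2, by ring, by linear_combination (-1/4 : ℂ) * hs, by ring⟩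
  have hlm : lam - mu ≠ 0 := by rw [hdiff]; exact hsne
  have hlam0 : lam ≠ 0 := by
    intro h; rw [h] at hprod; simp at hprod
  have hlam2 : lam^2 = (a^2-2)*lam - 1 := by linear_combination lam * hsum - hprod
  have hmu2 : mu^2 = (a^2-2)*mu - 1 := by linear_combination mu * hsum - hprod
  set p : ℕ → ℂ := fun k => U (k+1) - U k with hp
  set q : ℕ → ℂ := fun k => V (k+1) - V k with hq
  have hprec : ∀ k, p (k+1) = - p k - a * q k := by
    intro k
    simp only [hp, hq]
    rw [hU (k+1), hU k]
    ring
  have hqrec : ∀ k, q (k+1) = a * p k + (a^2 - 1) * q k := by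
    intro k
    have h1 : q (k+1) = - a * p (k+1) - q k := by
      simp only [hp, hq]
      rw [hV (k+1), hV k]
      ring
    rw [h1, hprec k]
    ring
  obtain ⟨al, be, hb1, hb2⟩ :
      ∃ al be : ℂ, p 0 = a * (al + be) ∧ q 0 = -((1+lam) * al + (1+mu) * be) := by
    refine ⟨((-(q 0) - p 0 / a) - mu * (p 0 / a)) / (lam - mu),
            (lam * (p 0 / a) - (-(q 0) - p 0 / a)) / (lam - mu), ?_, ?_⟩
    · field_simp
      ring
    · field_simp
      ring
  have hform : ∀ k, p k = a * (al * lam^k + be * mu^k) ∧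
      q k = -((1+lam) * al * lam^k + (1+mu) * be * mu^k) := by
    intro k
    induction k with
    | zero =>
      constructor
      · simp only [pow_zero, mul_one]; exact hb1
      · simp only [pow_zero, mul_one]; exact hb2
    | succ k ih =>
      obtain ⟨ih1, ih2⟩ := ih
      constructor
      · rw [hprec k, ih1, ih2]; ring
      · rw [hqrec k, ih1, ih2]
        linear_combination (al * lam^k) * hlam2 + (be * mu^k) * hmu2
  have hpm : p m = p 0 := by
    have e1 : U (m+1) = U 1 := by rw [Nat.add_comm]; exact hUm 1
    have e0 : U m = U 0 := by simpa using hUm 0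
    simp only [hp, e1, e0]
  have hqm : q m = q 0 := by
    have e1 : V (m+1) = V 1 := by rw [Nat.add_comm]; exact hVm 1
    have e0 : V m = V 0 := by simpa using hVm 0
    simp only [hq, e1, e0]
  obtain ⟨hpf, hqf⟩ := hform m
  rw [hpm, hb1] at hpf
  rw [hqm, hb2] at hqf
  have e1 : al * (lam^m - 1) + be * (mu^m - 1) = 0 := by
    have h := mul_left_cancel₀ ha0 hpf
    linear_combination -h
  have e2 : (1+lam) * (al * (lam^m - 1)) + (1+mu) * (be * (mu^m - 1)) = 0 := by
    linear_combination hqf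
  have e3 : (mu - lam) * (be * (mu^m - 1)) = 0 := by
    linear_combination e2 - (1+lam) * e1
  have e4 : be * (mu^m - 1) = 0 := by
    rcases mul_eq_zero.1 e3 with h|h
    · exact absurd (by linear_combination -h - hdiff : s = 0) hsne
    · exact h
  have e5 : al * (lam^m - 1) = 0 := by linear_combination e1 - e4
  by_cases hl1 : lam ^ m = 1
  · have habs : ‖lam‖ = 1 := abs_one_of_pow hm hl1
    have hconj : lam⁻¹ = starRingEnd ℂ lam := Complex.inv_eq_conj habs
    have hmuc : mu = starRingEnd ℂ lam := by
      rw [← hconj]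
      field_simp
      linear_combination hprod
    have hre : a^2 = 2 + lam + (starRingEnd ℂ) lam := by
      linear_combination -hsum + hmuc
    have haim : (a^2).im = 0 := by
      rw [hre]; simp
    have hare : (a^2).re = 2 + 2 * lam.re := by
      rw [hre]; simp [Complex.add_re, Complex.conj_re]; ring
    have hlre : -1 ≤ lam.re := by
      have h := Complex.abs_re_le_norm lam
      rw [habs] at h
      cases' abs_le.1 h with h1 _
      linarith
    have h2 : a.re * a.im = 0 := by
      have h := haim
      rw [pow_two] at h
      simp [Complex.mul_im] at h
      linarith
    have hre0 : a.re = 0 := by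
      rcases mul_eq_zero.1 h2 with h|h
      · exact h
      · exact absurd h him
    have hsq : (a^2).re = a.re * a.re - a.im * a.im := by
      rw [pow_two, Complex.mul_re]
    have hpos : 0 < a.im * a.im := mul_self_pos.2 him
    rw [hre0] at hsq
    linarith
  · have hmu1 : mu ^ m ≠ 1 := by
      intro h
      apply hl1
      have h' : (lam * mu)^m = 1 := by rw [hprod]; simp
      rw [mul_pow, h, mul_one] at h'
      exact h'
    have hal : al = 0 := by
      rcases mul_eq_zero.1 e5 with h|h
      · exact h
      · exact absurd (by linear_combination h : lam^m = 1) hl1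
    have hbe : be = 0 := by
      rcases mul_eq_zero.1 e4 with h|h
      · exact h
      · exact absurd (by linear_combination h : mu^m = 1) hmu1
    rw [hal, hbe] at hb1 hb2
    simp at hb1 hb2
    rcases hne with h|h
    · exact h (by have h' : U (0+1) - U 0 = 0 := hb1; linear_combination h')
    · exact h (by have h' : V (0+1) - V 0 = 0 := hb2; linear_combination h')

lemma fix1 (θ : ℂ × ℂ × ℂ × ℂ) (y : ℂ × ℂ × ℂ) (h : sig θ 1 (sig θ 2 y) = y) :
    sig θ 1 y = y ∧ sig θ 2 y = y := by
  have h3 : sig θ 2 y = y := by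
    have h22 := congrArg (fun p : ℂ × ℂ × ℂ => p.2.2) h
    exact Prod.ext rfl (Prod.ext rfl h22)
  rw [h3] at h
  exact ⟨h, h3⟩

lemma fix2 (θ : ℂ × ℂ × ℂ × ℂ) (y : ℂ × ℂ × ℂ) (h : sig θ 2 (sig θ 0 y) = y) :
    sig θ 2 y = y ∧ sig θ 0 y = y := by
  have h3 : sig θ 0 y = y := by
    have h22 := congrArg (fun p : ℂ × ℂ × ℂ => p.1) h
    exact Prod.ext h22 rfl
  rw [h3] at h
  exact ⟨h, h3⟩

lemma fix3 (θ : ℂ × ℂ × ℂ × ℂ) (y : ℂ × ℂ × ℂ) (h : sig θ 0 (sig θ 1 y) = y) :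
    sig θ 0 y = y ∧ sig θ 1 y = y := by
  have h3 : sig θ 1 y = y := by
    have h22 := congrArg (fun p : ℂ × ℂ × ℂ => p.2.1) h
    exact Prod.ext rfl (Prod.ext h22 rfl)
  rw [h3] at h
  exact ⟨h, h3⟩

section Real

variable (θ : ℂ × ℂ × ℂ × ℂ) (x₀ : ℂ × ℂ × ℂ) (O : Set (ℂ × ℂ × ℂ))

lemma real1 (hO : O = {y | ∃ g ∈ G2 θ, g x₀ = y}) (hfin : O.Finite)
    (y : ℂ × ℂ × ℂ) (hy : y ∈ O) (hne : ¬(sig θ 1 y = y ∧ sig θ 2 y = y)) :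
    y.1.im = 0 := by
  set g := sigPerm θ 1 * sigPerm θ 2 with hg
  obtain ⟨m, hm, hper⟩ := O_period θ x₀ O hO hfin g (pair_mem_G2 θ 1 2) y hy
  set P : ℕ → ℂ × ℂ × ℂ := fun k => (g ^ k) y with hP
  have hP0 : P 0 = y := by simp [hP]
  have hstep : ∀ k, P (k+1) = sig θ 1 (sig θ 2 (P k)) := by
    intro k
    simp only [hP, pow_succ' g k, Equiv.Perm.mul_apply]
    rfl
  have hfst : ∀ k, (P k).1 = y.1 := by
    intro k
    induction k with
    | zero => rw [hP0]
    | succ k ih => rw [hstep k, sig1_apply, sig2_apply]; exact ih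
  apply keyLemma y.1 θ.2.2.1 θ.2.1 (fun k => (P k).2.2) (fun k => (P k).2.1) m hm
  · intro k
    show (P (k+1)).2.2 = θ.2.2.1 - y.1 * (P k).2.1 - (P k).2.2
    rw [hstep k, ← hfst k]
    rfl
  · intro k
    show (P (k+1)).2.1 = θ.2.1 - y.1 * (P (k+1)).2.2 - (P k).2.1
    rw [hstep k, ← hfst k]
    rfl
  · intro k
    show (P (k+m)).2.2 = (P k).2.2
    simp only [hP]
    rw [hper k]
  · intro k
    show (P (k+m)).2.1 = (P k).2.1
    simp only [hP]
    rw [hper k]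
  · by_contra hc
    push_neg at hc
    apply hne
    apply fix1
    have h1 : (P 1).1 = (P 0).1 := by rw [hfst 1, hfst 0]
    have hPP : P 1 = P 0 := Prod.ext h1 (Prod.ext hc.2 hc.1)
    rw [hP0, hstep 0, hP0] at hPP
    exact hPP

lemma real2 (hO : O = {y | ∃ g ∈ G2 θ, g x₀ = y}) (hfin : O.Finite)
    (y : ℂ × ℂ × ℂ) (hy : y ∈ O) (hne : ¬(sig θ 2 y = y ∧ sig θ 0 y = y)) :
    y.2.1.im = 0 := by
  set g := sigPerm θ 2 * sigPerm θ 0 with hg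
  obtain ⟨m, hm, hper⟩ := O_period θ x₀ O hO hfin g (pair_mem_G2 θ 2 0) y hy
  set P : ℕ → ℂ × ℂ × ℂ := fun k => (g ^ k) y with hP
  have hP0 : P 0 = y := by simp [hP]
  have hstep : ∀ k, P (k+1) = sig θ 2 (sig θ 0 (P k)) := by
    intro k
    simp only [hP, pow_succ' g k, Equiv.Perm.mul_apply]
    rfl
  have hsnd : ∀ k, (P k).2.1 = y.2.1 := by
    intro k
    induction k with
    | zero => rw [hP0]
    | succ k ih => rw [hstep k, sig2_apply, sig0_apply]; exact ih
  apply keyLemma y.2.1 θ.1 θ.2.2.1 (fun k => (P k).1) (fun k => (P k).2.2) m hm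
  · intro k
    show (P (k+1)).1 = θ.1 - y.2.1 * (P k).2.2 - (P k).1
    rw [hstep k, ← hsnd k, sig2_apply, sig0_apply]
    try ring
  · intro k
    show (P (k+1)).2.2 = θ.2.2.1 - y.2.1 * (P (k+1)).1 - (P k).2.2
    rw [hstep k, ← hsnd k, sig2_apply, sig0_apply]
    try ring
  · intro k
    show (P (k+m)).1 = (P k).1
    simp only [hP]
    rw [hper k]
  · intro k
    show (P (k+m)).2.2 = (P k).2.2
    simp only [hP]
    rw [hper k]
  · by_contra hc
    push_neg at hc
    apply hne
    apply fix2
    have h1 : (P 1).2.1 = (P 0).2.1 := by rw [hsnd 1, hsnd 0]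
    have hPP : P 1 = P 0 := Prod.ext hc.1 (Prod.ext h1 hc.2)
    rw [hP0, hstep 0, hP0] at hPP
    exact hPP

lemma real3 (hO : O = {y | ∃ g ∈ G2 θ, g x₀ = y}) (hfin : O.Finite)
    (y : ℂ × ℂ × ℂ) (hy : y ∈ O) (hne : ¬(sig θ 0 y = y ∧ sig θ 1 y = y)) :
    y.2.2.im = 0 := by
  set g := sigPerm θ 0 * sigPerm θ 1 with hg
  obtain ⟨m, hm, hper⟩ := O_period θ x₀ O hO hfin g (pair_mem_G2 θ 0 1) y hy
  set P : ℕ → ℂ × ℂ × ℂ := fun k => (g ^ k) y with hP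
  have hP0 : P 0 = y := by simp [hP]
  have hstep : ∀ k, P (k+1) = sig θ 0 (sig θ 1 (P k)) := by
    intro k
    simp only [hP, pow_succ' g k, Equiv.Perm.mul_apply]
    rfl
  have hthd : ∀ k, (P k).2.2 = y.2.2 := by
    intro k
    induction k with
    | zero => rw [hP0]
    | succ k ih => rw [hstep k, sig0_apply, sig1_apply]; exact ih
  apply keyLemma y.2.2 θ.2.1 θ.1 (fun k => (P k).2.1) (fun k => (P k).1) m hm
  · intro k
    show (P (k+1)).2.1 = θ.2.1 - y.2.2 * (P k).1 - (P k).2.1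
    rw [hstep k, ← hthd k, sig0_apply, sig1_apply]
    try ring
  · intro k
    show (P (k+1)).1 = θ.1 - y.2.2 * (P (k+1)).2.1 - (P k).1
    rw [hstep k, ← hthd k, sig0_apply, sig1_apply]
    try ring
  · intro k
    show (P (k+m)).2.1 = (P k).2.1
    simp only [hP]
    rw [hper k]
  · intro k
    show (P (k+m)).1 = (P k).1
    simp only [hP]
    rw [hper k]
  · by_contra hc
    push_neg at hc
    apply hne
    apply fix3
    have h1 : (P 1).2.2 = (P 0).2.2 := by rw [hthd 1, hthd 0]
    have hPP : P 1 = P 0 := Prod.ext hc.2 (Prod.ext hc.1 h1)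
    rw [hP0, hstep 0, hP0] at hPP
    exact hPP

end Real

lemma card_contra {α : Type*} {s : Set α} {x y z w : α} (hsub : s ⊆ {x, y, z, w})
    (h7 : 7 ≤ s.encard) : False := by
  have h1 : s.encard ≤ ({x, y, z, w} : Set α).encard := Set.encard_le_encard hsub
  have h2 : ({x, y, z, w} : Set α).encard ≤ 4 := by
    refine le_trans (Set.encard_insert_le _ _) ?_
    refine le_trans (add_le_add_left (Set.encard_insert_le _ _) 1) ?_
    refine le_trans (add_le_add_left (add_le_add_left (Set.encard_insert_le _ _) 1) 1) ?_
    simp [Set.encard_singleton]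
    norm_num
  have h3 : (7 : ℕ∞) ≤ 4 := le_trans h7 (le_trans h1 h2)
  norm_num at h3

lemma mainContra (θ : ℂ × ℂ × ℂ × ℂ) (x₀ : ℂ × ℂ × ℂ) (O : Set (ℂ × ℂ × ℂ))
    (hO : O = {y | ∃ g ∈ G2 θ, g x₀ = y}) (hfin : O.Finite) (hcard : 7 ≤ O.encard)
    (x : ℂ × ℂ × ℂ) (hx : x ∈ O) (him : x.1.im ≠ 0) : False := by
  obtain ⟨a, b, c⟩ := x
  simp only [] at him
  -- x is fixed by σ₂ and σ₃
  have hfix1 : sig θ 1 (a, b, c) = (a, b, c) ∧ sig θ 2 (a, b, c) = (a, b, c) := by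
    by_contra h
    exact him (real1 θ x₀ O hO hfin (a, b, c) hx h)
  -- the two fixed point equations
  have E2 : θ.2.1 - a * c - b = b := by
    have h := hfix1.1
    rw [sig1_apply] at h
    simp only [Prod.mk.injEq] at h
    exact h.2.1
  have E3 : θ.2.2.1 - a * b - c = c := by
    have h := hfix1.2
    rw [sig2_apply] at h
    simp only [Prod.mk.injEq] at h
    exact h.2.2
  -- x is not fixed by σ₁
  have hall : sig θ 0 (a, b, c) ≠ (a, b, c) := by
    intro h0
    refine card_contra (x := (a,b,c)) (y := (a,b,c)) (z := (a,b,c)) (w := (a,b,c))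
      (orbit_subset θ x₀ O hO _ ?_ (a,b,c) hx (by simp)) hcard
    intro i p hp
    simp only [Set.mem_insert_iff, Set.mem_singleton_iff] at hp ⊢
    rcases hp with rfl | rfl | rfl | rfl <;>
      · fin_cases i
        · simp [h0]
        · simp [hfix1.1]
        · simp [hfix1.2]
  -- b and c are real
  have hbim : b.im = 0 := by
    have h := real2 θ x₀ O hO hfin (a, b, c) hx (by rintro ⟨-, h0⟩; exact hall h0)
    exact h
  have hcim : c.im = 0 := by
    have h := real3 θ x₀ O hO hfin (a, b, c) hx (by rintro ⟨h0, -⟩; exact hall h0)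
    exact h
  -- the point y = σ₁ x
  set y : ℂ × ℂ × ℂ := (θ.1 - b * c - a, b, c) with hydef
  have hy0 : sig θ 0 (a, b, c) = y := by rw [sig0_apply]
  have hyO : y ∈ O := by
    have h := O_step θ x₀ O hO 0 1 (a, b, c) hx
    rw [hfix1.1, hy0] at h
    exact h
  have hy0inv : sig θ 0 y = (a, b, c) := by
    have h := sig_involutive θ 0 (a, b, c)
    rw [hy0] at h
    exact h
  by_cases hA : sig θ 1 y = y ∧ sig θ 2 y = y
  · -- orbit is {x, y}
    refine card_contra (x := (a,b,c)) (y := y) (z := y) (w := y)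
      (orbit_subset θ x₀ O hO _ ?_ (a,b,c) hx (by simp)) hcard
    intro i p hp
    simp only [Set.mem_insert_iff, Set.mem_singleton_iff] at hp ⊢
    rcases hp with rfl | rfl | rfl | rfl <;>
      · fin_cases i
        · simp [hy0, hy0inv]
        · simp [hfix1.1, hA.1]
        · simp [hfix1.2, hA.2]
  · -- y has real first coordinate
    have hyim : y.1.im = 0 := real1 θ x₀ O hO hfin y hyO hA
    have hδ : (a - y.1).im ≠ 0 := by
      rw [Complex.sub_im, hyim]
      simpa using him
    -- the points z = σ₃ y and z2 = σ₂ y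
    set z : ℂ × ℂ × ℂ := sig θ 2 y with hzdef
    set z2 : ℂ × ℂ × ℂ := sig θ 1 y with hz2def
    have hzO : z ∈ O := by
      have h := O_step θ x₀ O hO 2 0 (a, b, c) hx
      rw [hy0] at h
      exact h
    have hz2O : z2 ∈ O := by
      have h := O_step θ x₀ O hO 1 0 (a, b, c) hx
      rw [hy0] at h
      exact h
    have hzinv : sig θ 2 z = y := sig_involutive θ 2 y
    have hz2inv : sig θ 1 z2 = y := sig_involutive θ 1 y
    have hz1 : z.1 = y.1 := rfl
    have hz2c : z.2.1 = b := rfl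
    have hz3 : z.2.2 = c + (a - y.1) * b := by
      show θ.2.2.1 - y.1 * b - c = c + (a - y.1) * b
      linear_combination E3
    have hz2a : z2.1 = y.1 := rfl
    have hz2b : z2.2.1 = b + (a - y.1) * c := by
      show θ.2.1 - y.1 * c - b = b + (a - y.1) * c
      linear_combination E2
    have hz2cc : z2.2.2 = c := rfl
    -- closure facts for z
    have hzC : (sig θ 0 z = z ∧ sig θ 1 z = z) ∨ z = y := by
      by_cases hb : b = 0
      · right
        refine Prod.ext rfl (Prod.ext rfl ?_)
        rw [hz3, hb]
        ring_nf
        rfl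
      · left
        by_contra h
        have h3 := real3 θ x₀ O hO hfin z hzO h
        rw [hz3] at h3
        have hbre : b.re ≠ 0 := by
          intro hr
          exact hb (Complex.ext hr hbim)
        rw [Complex.add_im, Complex.mul_im, hcim, hbim] at h3
        simp at h3
        rcases h3 with h3 | h3
        · exact hδ h3
        · exact hbre h3
    have hz2C : (sig θ 2 z2 = z2 ∧ sig θ 0 z2 = z2) ∨ z2 = y := by
      by_cases hc : c = 0
      · right
        refine Prod.ext rfl (Prod.ext ?_ rfl)
        rw [hz2b, hc]
        ring_nf
        rfl
      · left
        by_contra h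
        have h3 := real2 θ x₀ O hO hfin z2 hz2O h
        rw [hz2b] at h3
        have hcre : c.re ≠ 0 := by
          intro hr
          exact hc (Complex.ext hr hcim)
        rw [Complex.add_im, Complex.mul_im, hcim, hbim] at h3
        simp at h3
        rcases h3 with h3 | h3
        · exact hδ h3
        · exact hcre h3
    -- the orbit is contained in {x, y, z, z2}
    refine card_contra (x := (a,b,c)) (y := y) (z := z) (w := z2)
      (orbit_subset θ x₀ O hO _ ?_ (a,b,c) hx (by simp)) hcard
    intro i p hp
    simp only [Set.mem_insert_iff, Set.mem_singleton_iff] at hp ⊢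
    rcases hp with rfl | rfl | rfl | rfl
    · fin_cases i
      · simp [hy0]
      · simp [hfix1.1]
      · simp [hfix1.2]
    · fin_cases i
      · simp [hy0inv]
      · right; right; right; exact hz2def.symm
      · right; right; left; exact hzdef.symm
    · fin_cases i
      · rcases hzC with ⟨h0, h1⟩ | hzy
        · simp [h0]
        · simp [hzy, hy0inv]
      · rcases hzC with ⟨h0, h1⟩ | hzy
        · simp [h1]
        · right; right; right; rw [hzy]; exact hz2def.symm
      · simp [hzinv]
    · fin_cases i
      · rcases hz2C with ⟨h2, h0⟩ | hzy
        · simp [h0]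
        · simp [hzy, hy0inv]
      · simp [hz2inv]
      · rcases hz2C with ⟨h2, h0⟩ | hzy
        · simp [h2]
        · right; right; left; rw [hzy]; exact hzdef.symm

def cycE : Equiv.Perm (ℂ × ℂ × ℂ) :=
  { toFun := fun p => (p.2.1, p.2.2, p.1),
    invFun := fun p => (p.2.2, p.1, p.2.1),
    left_inv := fun p => rfl,
    right_inv := fun p => rfl }

def cth (θ : ℂ × ℂ × ℂ × ℂ) : ℂ × ℂ × ℂ × ℂ := (θ.2.1, θ.2.2.1, θ.1, θ.2.2.2)

def cmap : Fin 3 → Fin 3 := ![2, 0, 1]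

lemma conj_sig (θ : ℂ × ℂ × ℂ × ℂ) (i : Fin 3) :
    cycE * sigPerm θ i * cycE⁻¹ = sigPerm (cth θ) (cmap i) := by
  apply Equiv.ext
  intro p
  obtain ⟨u, v, w⟩ := p
  rw [Equiv.Perm.mul_apply, Equiv.Perm.mul_apply]
  fin_cases i
  · rfl
  · exact Prod.ext (by show θ.2.1 - w * v - u  = θ.2.1 - v * w - u; ring) rfl
  · exact Prod.ext rfl (Prod.ext (by show θ.2.2.1 - w * u - v = θ.2.2.1 - u * w - v; ring) rfl)

lemma conj_sig' (θ : ℂ × ℂ × ℂ × ℂ) (k : Fin 3) :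
    cycE⁻¹ * sigPerm (cth θ) k * cycE = sigPerm θ (cmap (cmap k)) := by
  have h := conj_sig θ (cmap (cmap k))
  have hck : cmap (cmap (cmap k)) = k := by fin_cases k <;> rfl
  rw [hck] at h
  rw [← h]
  group

lemma conj_mem (θ : ℂ × ℂ × ℂ × ℂ) (g : Equiv.Perm (ℂ × ℂ × ℂ)) (hg : g ∈ G2 θ) :
    cycE * g * cycE⁻¹ ∈ G2 (cth θ) := by
  induction hg using Subgroup.closure_induction'' with
  | mem g hgen =>
    obtain ⟨i, j, rfl⟩ := hgen
    have h : cycE * (sigPerm θ i * sigPerm θ j) * cycE⁻¹ =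
        (cycE * sigPerm θ i * cycE⁻¹) * (cycE * sigPerm θ j * cycE⁻¹) := by group
    rw [h, conj_sig, conj_sig]
    exact pair_mem_G2 (cth θ) _ _
  | inv_mem g hgen =>
    obtain ⟨i, j, rfl⟩ := hgen
    have h : cycE * (sigPerm θ i * sigPerm θ j)⁻¹ * cycE⁻¹ =
        (cycE * sigPerm θ j * cycE⁻¹) * (cycE * sigPerm θ i * cycE⁻¹) := by
      rw [mul_inv_rev, sigPerm_inv, sigPerm_inv]; group
    rw [h, conj_sig, conj_sig]
    exact pair_mem_G2 (cth θ) _ _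
  | one =>
    have h : cycE * 1 * cycE⁻¹ = (1 : Equiv.Perm (ℂ × ℂ × ℂ)) := by group
    rw [h]; exact one_mem _
  | mul g h hgm hhm hg hh =>
    have he : cycE * (g * h) * cycE⁻¹ = (cycE * g * cycE⁻¹) * (cycE * h * cycE⁻¹) := by group
    rw [he]; exact mul_mem hg hh

lemma conj_mem' (θ : ℂ × ℂ × ℂ × ℂ) (g : Equiv.Perm (ℂ × ℂ × ℂ)) (hg : g ∈ G2 (cth θ)) :
    cycE⁻¹ * g * cycE ∈ G2 θ := by
  induction hg using Subgroup.closure_induction'' with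
  | mem g hgen =>
    obtain ⟨i, j, rfl⟩ := hgen
    have h : cycE⁻¹ * (sigPerm (cth θ) i * sigPerm (cth θ) j) * cycE =
        (cycE⁻¹ * sigPerm (cth θ) i * cycE) * (cycE⁻¹ * sigPerm (cth θ) j * cycE) := by group
    rw [h, conj_sig', conj_sig']
    exact pair_mem_G2 θ _ _
  | inv_mem g hgen =>
    obtain ⟨i, j, rfl⟩ := hgen
    have h : cycE⁻¹ * (sigPerm (cth θ) i * sigPerm (cth θ) j)⁻¹ * cycE =
        (cycE⁻¹ * sigPerm (cth θ) j * cycE) * (cycE⁻¹ * sigPerm (cth θ) i * cycE) := by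
      rw [mul_inv_rev, sigPerm_inv, sigPerm_inv]; group
    rw [h, conj_sig', conj_sig']
    exact pair_mem_G2 θ _ _
  | one =>
    have h : cycE⁻¹ * 1 * cycE = (1 : Equiv.Perm (ℂ × ℂ × ℂ)) := by group
    rw [h]; exact one_mem _
  | mul g h hgm hhm hg hh =>
    have he : cycE⁻¹ * (g * h) * cycE = (cycE⁻¹ * g * cycE) * (cycE⁻¹ * h * cycE) := by group
    rw [he]; exact mul_mem hg hh

lemma orbit_image (θ : ℂ × ℂ × ℂ × ℂ) (x₀ : ℂ × ℂ × ℂ) (O : Set (ℂ × ℂ × ℂ))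
    (hO : O = {y | ∃ g ∈ G2 θ, g x₀ = y}) :
    (cycE '' O : Set (ℂ × ℂ × ℂ)) = {y | ∃ g ∈ G2 (cth θ), g (cycE x₀) = y} := by
  ext p
  constructor
  · rintro ⟨q, hq, rfl⟩
    obtain ⟨g, hg, rfl⟩ := (O_mem_iff θ x₀ O hO q).1 hq
    refine ⟨cycE * g * cycE⁻¹, conj_mem θ g hg, ?_⟩
    simp [Equiv.Perm.mul_apply]
  · rintro ⟨g, hg, rfl⟩
    refine ⟨(cycE⁻¹ * g * cycE) x₀,
      (O_mem_iff θ x₀ O hO _).2 ⟨_, conj_mem' θ g hg, rfl⟩, ?_⟩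
    simp [Equiv.Perm.mul_apply]


/-- If `S(θ)` carries a finite `G(2)`-orbit with at least 7 elements, then the
parameters `θ₁, θ₂, θ₃, θ₄` are all real and the orbit lies in the real part
`S(θ) ∩ ℝ³` of the surface. -/
theorem finite_orbit_real (θ : ℂ × ℂ × ℂ × ℂ)
    (x₀ : ℂ × ℂ × ℂ) (hx₀ : x₀ ∈ pvS θ)
    (O : Set (ℂ × ℂ × ℂ)) (hO : O = {y | ∃ g ∈ G2 θ, g x₀ = y})
    (hfin : O.Finite) (hcard : 7 ≤ O.encard) :
    (θ.1.im = 0 ∧ θ.2.1.im = 0 ∧ θ.2.2.1.im = 0 ∧ θ.2.2.2.im = 0) ∧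
    ∀ x ∈ O, x.1.im = 0 ∧ x.2.1.im = 0 ∧ x.2.2.im = 0 := by
  have hx₀O : x₀ ∈ O := (O_mem_iff θ x₀ O hO x₀).2 ⟨1, one_mem _, rfl⟩
  have hreal : ∀ x ∈ O, x.1.im = 0 ∧ x.2.1.im = 0 ∧ x.2.2.im = 0 := by
    intro x hx
    refine ⟨?_, ?_, ?_⟩
    · by_contra h
      exact mainContra θ x₀ O hO hfin hcard x hx h
    · by_contra h
      refine mainContra (cth θ) (cycE x₀) (cycE '' O) (orbit_image θ x₀ O hO)
        (hfin.image _) ?_ (cycE x) ⟨x, hx, rfl⟩ h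
      rw [cycE.injective.encard_image]
      exact hcard
    · by_contra h
      refine mainContra (cth (cth θ)) (cycE (cycE x₀)) (cycE '' (cycE '' O))
        (orbit_image (cth θ) (cycE x₀) (cycE '' O) (orbit_image θ x₀ O hO))
        ((hfin.image _).image _) ?_ (cycE (cycE x)) ⟨cycE x, ⟨x, hx, rfl⟩, rfl⟩ h
      rw [cycE.injective.encard_image, cycE.injective.encard_image]
      exact hcard
  obtain ⟨ha, hb, hc⟩ := hreal x₀ hx₀O
  have hv : sig θ 0 (sig θ 1 x₀) ∈ O := O_step θ x₀ O hO 0 1 x₀ hx₀O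
  have hw : sig θ 1 (sig θ 2 x₀) ∈ O := O_step θ x₀ O hO 1 2 x₀ hx₀O
  obtain ⟨hv1, hv2, hv3⟩ := hreal _ hv
  obtain ⟨hw1, hw2, hw3⟩ := hreal _ hw
  have hv2' : (θ.2.1 - x₀.1 * x₀.2.2 - x₀.2.1).im = 0 := hv2
  have t2im : θ.2.1.im = 0 := by
    have hmul : (x₀.1 * x₀.2.2).im = 0 := by rw [Complex.mul_im, ha, hc]; ring
    have h := hv2'
    rw [Complex.sub_im, Complex.sub_im, hmul, hb] at h
    linarith
  have hv1' : (θ.1 - (θ.2.1 - x₀.1 * x₀.2.2 - x₀.2.1) * x₀.2.2 - x₀.1).im = 0 := hv1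
  have t1im : θ.1.im = 0 := by
    have hmul : ((θ.2.1 - x₀.1 * x₀.2.2 - x₀.2.1) * x₀.2.2).im = 0 := by
      rw [Complex.mul_im, hv2', hc]; ring
    have h := hv1'
    rw [Complex.sub_im, Complex.sub_im, hmul, ha] at h
    linarith
  have hw3' : (θ.2.2.1 - x₀.1 * x₀.2.1 - x₀.2.2).im = 0 := hw3
  have t3im : θ.2.2.1.im = 0 := by
    have hmul : (x₀.1 * x₀.2.1).im = 0 := by rw [Complex.mul_im, ha, hb]; ring
    have h := hw3'
    rw [Complex.sub_im, Complex.sub_im, hmul, hc] at h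
    linarith
  have t4im : θ.2.2.2.im = 0 := by
    have h4 : θ.2.2.2 = θ.1 * x₀.1 + θ.2.1 * x₀.2.1 + θ.2.2.1 * x₀.2.2
        - x₀.1 * x₀.2.1 * x₀.2.2 - x₀.1 * x₀.1 - x₀.2.1 * x₀.2.1 - x₀.2.2 * x₀.2.2 := by
      have h := hx₀
      simp only [pvS, Set.mem_setOf_eq, pvF] at h
      linear_combination h
    rw [h4]
    simp only [Complex.add_im, Complex.sub_im, Complex.mul_im, Complex.mul_re,
      t1im, t2im, t3im, ha, hb, hc]
    ring
  exact ⟨⟨t1im, t2im, t3im, t4im⟩, hreal⟩
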